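/- Let X be a length space with basepoint *, and let X̄ be the set of all arclength-parameterized weakly normal rectifiable paths (ρ-paths) c:[0,L(c)]→X starting at *. Define d(c₁,c₂) := L(c₁) + L(c₂) − 2L(c₁∧c₂), where c₁∧c₂ is the restriction of both paths to the largest initial interval [0,b] on which they coincide. Then d is a metric on X̄. -/
import Mathlib


open Set

/-- An arclength-parameterized weakly normal rectifiable path (ρ-path) in a metric
space `X`.  The path is defined on `[0, len]`, extended constantly outside. -/
structure RPath (X : Type*) [MetricSpace X] where
  /-- the length of the path -/
  len : ℝ
  len_nonneg : 0 ≤ len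
  toFun : ℝ → X
  contOn : ContinuousOn toFun (Icc 0 len)
  /-- arclength parameterization: the length of the restriction to `[s,t]` is `t - s`. -/
  arclength : ∀ s t : ℝ, 0 ≤ s → s ≤ t → t ≤ len →
    eVariationOn toFun (Icc s t) = ENNReal.ofReal (t - s)
  clamp_left : ∀ t : ℝ, t ≤ 0 → toFun t = toFun 0
  clamp_right : ∀ t : ℝ, len ≤ t → toFun t = toFun len
  /-- weak normality: no nontrivial subsegment `[u,v]` with equal endpoints is
  null-homotopic in its own image rel endpoints. -/
  weaklyNormal : ¬ ∃ u v : ℝ, 0 ≤ u ∧ u < v ∧ v ≤ len ∧ toFun u = toFun v ∧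
    ∃ H : ℝ × ℝ → X, ContinuousOn H (Icc u v ×ˢ Icc 0 1) ∧
      (∀ t ∈ Icc u v, H (t, 0) = toFun t) ∧
      (∀ t ∈ Icc u v, H (t, 1) = toFun u) ∧
      (∀ s ∈ Icc (0:ℝ) 1, H (u, s) = toFun u ∧ H (v, s) = toFun v) ∧
      (∀ p ∈ Icc u v ×ˢ Icc (0:ℝ) 1, H p ∈ toFun '' Icc u v)

namespace RPath

variable {X : Type*} [MetricSpace X]

/-- `c` starts at the point `p`. -/
def StartsAt (c : RPath X) (p : X) : Prop := c.toFun 0 = p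

/-- `c` ends at the point `p`. -/
def EndsAt (c : RPath X) (p : X) : Prop := c.toFun c.len = p

/-- The length `L(c₁ ∧ c₂)` of the longest common initial segment of two paths. -/
noncomputable def wedgeLen (c₁ c₂ : RPath X) : ℝ :=
  sSup {b : ℝ | 0 ≤ b ∧ b ≤ c₁.len ∧ b ≤ c₂.len ∧ ∀ t ∈ Icc 0 b, c₁.toFun t = c₂.toFun t}

/-- The distance `d(c₁,c₂) = L(c₁) + L(c₂) - 2 L(c₁ ∧ c₂)`. -/
noncomputable def rhoDist (c₁ c₂ : RPath X) : ℝ :=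
  c₁.len + c₂.len - 2 * wedgeLen c₁ c₂

end RPath

/-- A length space: a metric space with at least two points in which any two points
are joined by paths of length arbitrarily close to the distance between them. -/
def IsLengthSpace (X : Type*) [MetricSpace X] : Prop :=
  (∃ x y : X, x ≠ y) ∧
  ∀ x y : X, ∀ ε : ℝ, 0 < ε → ∃ (c : ℝ → X) (b : ℝ), 0 ≤ b ∧
    ContinuousOn c (Icc 0 b) ∧ c 0 = x ∧ c b = y ∧
    eVariationOn c (Icc 0 b) < ENNReal.ofReal (dist x y + ε)


namespace RPath

variable {X : Type*} [MetricSpace X]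

/-- The defining set of `wedgeLen`. -/
def wedgeSet (c₁ c₂ : RPath X) : Set ℝ :=
  {b : ℝ | 0 ≤ b ∧ b ≤ c₁.len ∧ b ≤ c₂.len ∧ ∀ t ∈ Icc 0 b, c₁.toFun t = c₂.toFun t}

lemma wedgeLen_eq_sSup (c₁ c₂ : RPath X) : wedgeLen c₁ c₂ = sSup (wedgeSet c₁ c₂) := rfl

lemma zero_mem_wedgeSet {c₁ c₂ : RPath X} {p : X} (h1 : c₁.StartsAt p)
    (h2 : c₂.StartsAt p) : (0:ℝ) ∈ wedgeSet c₁ c₂ := by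
  refine ⟨le_refl 0, c₁.len_nonneg, c₂.len_nonneg, ?_⟩
  intro t ht
  rw [Icc_self, mem_singleton_iff] at ht
  subst ht
  rw [show c₁.toFun 0 = p from h1, show c₂.toFun 0 = p from h2]

lemma bddAbove_wedgeSet (c₁ c₂ : RPath X) : BddAbove (wedgeSet c₁ c₂) :=
  ⟨c₁.len, fun _ hb => hb.2.1⟩

lemma wedgeLen_nonneg {c₁ c₂ : RPath X} {p : X} (h1 : c₁.StartsAt p)
    (h2 : c₂.StartsAt p) : 0 ≤ wedgeLen c₁ c₂ :=
  le_csSup (bddAbove_wedgeSet c₁ c₂) (zero_mem_wedgeSet h1 h2)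

lemma wedgeLen_le_left {c₁ c₂ : RPath X} {p : X} (h1 : c₁.StartsAt p)
    (h2 : c₂.StartsAt p) : wedgeLen c₁ c₂ ≤ c₁.len :=
  Real.sSup_le (fun _ hb => hb.2.1) c₁.len_nonneg

lemma wedgeLen_le_right {c₁ c₂ : RPath X} {p : X} (h1 : c₁.StartsAt p)
    (h2 : c₂.StartsAt p) : wedgeLen c₁ c₂ ≤ c₂.len :=
  Real.sSup_le (fun _ hb => hb.2.2.1) c₂.len_nonneg

lemma wedgeSet_comm (c₁ c₂ : RPath X) : wedgeSet c₁ c₂ = wedgeSet c₂ c₁ := by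
  ext b
  constructor <;> rintro ⟨h0, ha, hb, h⟩ <;>
    exact ⟨h0, hb, ha, fun t ht => (h t ht).symm⟩

lemma wedgeLen_comm (c₁ c₂ : RPath X) : wedgeLen c₁ c₂ = wedgeLen c₂ c₁ := by
  rw [wedgeLen_eq_sSup, wedgeLen_eq_sSup, wedgeSet_comm]

/-- The supremum is attained: the two paths agree on all of `[0, wedgeLen]`. -/
lemma wedgeLen_mem {c₁ c₂ : RPath X} {p : X} (h1 : c₁.StartsAt p)
    (h2 : c₂.StartsAt p) : wedgeLen c₁ c₂ ∈ wedgeSet c₁ c₂ := by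
  set b := wedgeLen c₁ c₂ with hbdef
  have hb0 : 0 ≤ b := wedgeLen_nonneg h1 h2
  have hb1 : b ≤ c₁.len := wedgeLen_le_left h1 h2
  have hb2 : b ≤ c₂.len := wedgeLen_le_right h1 h2
  have hne : (wedgeSet c₁ c₂).Nonempty := ⟨0, zero_mem_wedgeSet h1 h2⟩
  -- agreement on [0, b)
  have hlt : ∀ t : ℝ, 0 ≤ t → t < b → c₁.toFun t = c₂.toFun t := by
    intro t ht0 htb
    obtain ⟨s, hs, hts⟩ := exists_lt_of_lt_csSup hne htb
    exact hs.2.2.2 t ⟨ht0, le_of_lt hts⟩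
  refine ⟨hb0, hb1, hb2, ?_⟩
  intro t ht
  rcases lt_or_eq_of_le ht.2 with h | h
  · exact hlt t ht.1 h
  · subst h
    rcases eq_or_lt_of_le hb0 with h0 | h0
    · have h0' : b = 0 := h0.symm
      rw [h0', show c₁.toFun 0 = p from h1, show c₂.toFun 0 = p from h2]
    · -- continuity at b = b from the left
      have hsub1 : Ico (0:ℝ) b ⊆ Icc 0 c₁.len := fun x hx =>
        ⟨hx.1, le_trans (le_of_lt hx.2) hb1⟩
      have hsub2 : Ico (0:ℝ) b ⊆ Icc 0 c₂.len := fun x hx =>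
        ⟨hx.1, le_trans (le_of_lt hx.2) hb2⟩
      have hmem1 : b ∈ Icc (0:ℝ) c₁.len := ⟨hb0, hb1⟩
      have hmem2 : b ∈ Icc (0:ℝ) c₂.len := ⟨hb0, hb2⟩
      have ht1 : Filter.Tendsto c₁.toFun (nhdsWithin b (Ico (0:ℝ) b)) (nhds (c₁.toFun b)) :=
        ((c₁.contOn b hmem1).mono hsub1).tendsto
      have ht2 : Filter.Tendsto c₂.toFun (nhdsWithin b (Ico (0:ℝ) b)) (nhds (c₂.toFun b)) :=
        ((c₂.contOn b hmem2).mono hsub2).tendsto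
      have hNB : (nhdsWithin b (Ico (0:ℝ) b)).NeBot := by
        apply mem_closure_iff_nhdsWithin_neBot.mp
        rw [closure_Ico (ne_of_lt h0)]
        exact ⟨hb0, le_refl b⟩
      have heq : c₁.toFun =ᶠ[nhdsWithin b (Ico (0:ℝ) b)] c₂.toFun := by
        filter_upwards [self_mem_nhdsWithin] with x hx
        exact hlt x hx.1 hx.2
      exact tendsto_nhds_unique (ht1.congr' heq) ht2

end RPath

/-- For a length space `X` with basepoint `*`, the function
`d(c₁,c₂) = L(c₁) + L(c₂) - 2 L(c₁ ∧ c₂)` is a metric on the set `X̄` of ρ-paths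
starting at `*`. -/
theorem rhoDist_is_metric {X : Type*} [MetricSpace X] (hX : IsLengthSpace X) (base : X) :
    (∀ c₁ c₂ : RPath X, c₁.StartsAt base → c₂.StartsAt base → 0 ≤ RPath.rhoDist c₁ c₂) ∧
    (∀ c : RPath X, c.StartsAt base → RPath.rhoDist c c = 0) ∧
    (∀ c₁ c₂ : RPath X, c₁.StartsAt base → c₂.StartsAt base →
      RPath.rhoDist c₁ c₂ = RPath.rhoDist c₂ c₁) ∧
    (∀ c₁ c₂ : RPath X, c₁.StartsAt base → c₂.StartsAt base →
      RPath.rhoDist c₁ c₂ = 0 → c₁ = c₂) ∧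
    (∀ c₁ c₂ c₃ : RPath X, c₁.StartsAt base → c₂.StartsAt base → c₃.StartsAt base →
      RPath.rhoDist c₁ c₃ ≤ RPath.rhoDist c₁ c₂ + RPath.rhoDist c₂ c₃) := by
  obtain ⟨-, -⟩ := hX
  refine ⟨?_, ?_, ?_, ?_, ?_⟩
  · intro c₁ c₂ h1 h2
    have a := RPath.wedgeLen_le_left h1 h2
    have b := RPath.wedgeLen_le_right h1 h2
    unfold RPath.rhoDist
    linarith
  · intro c hc
    have hmem : c.len ∈ RPath.wedgeSet c c :=
      ⟨c.len_nonneg, le_refl _, le_refl _, fun t _ => rfl⟩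
    have h1 : c.len ≤ RPath.wedgeLen c c :=
      le_csSup (RPath.bddAbove_wedgeSet c c) hmem
    have h2 : RPath.wedgeLen c c ≤ c.len := RPath.wedgeLen_le_left hc hc
    unfold RPath.rhoDist
    linarith
  · intro c₁ c₂ _ _
    unfold RPath.rhoDist
    rw [RPath.wedgeLen_comm]
    ring
  · intro c₁ c₂ h1 h2 hd
    have a := RPath.wedgeLen_le_left h1 h2
    have b := RPath.wedgeLen_le_right h1 h2
    unfold RPath.rhoDist at hd
    have hl1 : c₁.len = RPath.wedgeLen c₁ c₂ := by linarith
    have hl2 : c₂.len = RPath.wedgeLen c₁ c₂ := by linarith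
    obtain ⟨-, -, -, hagree⟩ := RPath.wedgeLen_mem h1 h2
    have hlen : c₁.len = c₂.len := hl1.trans hl2.symm
    have hfun : c₁.toFun = c₂.toFun := by
      funext t
      rcases le_or_gt t 0 with ht | ht
      · rw [c₁.clamp_left t ht, c₂.clamp_left t ht,
          show c₁.toFun 0 = base from h1, show c₂.toFun 0 = base from h2]
      · rcases le_or_gt t (RPath.wedgeLen c₁ c₂) with ht' | ht'
        · exact hagree t ⟨le_of_lt ht, ht'⟩
        · rw [c₁.clamp_right t (by rw [hl1]; exact le_of_lt ht'),
            c₂.clamp_right t (by rw [hl2]; exact le_of_lt ht'), hl1, hl2]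
          exact hagree _ ⟨RPath.wedgeLen_nonneg h1 h2, le_refl _⟩
    cases c₁; cases c₂
    simp only [RPath.mk.injEq] at hlen hfun ⊢
    exact ⟨hlen, hfun⟩
  · intro c₁ c₂ c₃ h1 h2 h3
    have key : min (RPath.wedgeLen c₁ c₂) (RPath.wedgeLen c₂ c₃) ≤ RPath.wedgeLen c₁ c₃ := by
      set m := min (RPath.wedgeLen c₁ c₂) (RPath.wedgeLen c₂ c₃) with hm
      obtain ⟨w0, w1, w2, w12⟩ := RPath.wedgeLen_mem h1 h2
      obtain ⟨v0, v1, v2, w23⟩ := RPath.wedgeLen_mem h2 h3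
      have hmem : m ∈ RPath.wedgeSet c₁ c₃ := by
        refine ⟨le_min w0 v0, le_trans (min_le_left _ _) w1,
          le_trans (min_le_right _ _) v2, ?_⟩
        intro t ht
        have h12 := w12 t ⟨ht.1, le_trans ht.2 (min_le_left _ _)⟩
        have h23 := w23 t ⟨ht.1, le_trans ht.2 (min_le_right _ _)⟩
        exact h12.trans h23
      exact le_csSup (RPath.bddAbove_wedgeSet c₁ c₃) hmem
    have a12 : RPath.wedgeLen c₁ c₂ ≤ c₂.len := RPath.wedgeLen_le_right h1 h2
    have a23 : RPath.wedgeLen c₂ c₃ ≤ c₂.len := RPath.wedgeLen_le_left h2 h3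
    unfold RPath.rhoDist
    rcases min_le_iff.mp (le_refl (min (RPath.wedgeLen c₁ c₂) (RPath.wedgeLen c₂ c₃))) with h | h
    all_goals
      rcases le_total (RPath.wedgeLen c₁ c₂) (RPath.wedgeLen c₂ c₃) with hc | hc
    · rw [min_eq_left hc] at key; linarith
    · rw [min_eq_right hc] at key; linarith
    · rw [min_eq_left hc] at key; linarith
    · rw [min_eq_right hc] at key; linarith
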